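/- Let q be an odd prime power such that 4 divides q + 1, and set n = q + 1. Then for every integer λ with 1 ≤ λ ≤ (q-3)/4 there exists a negacyclic LCD code over F_q of length q + 1 and dimension 4λ whose minimum distance is at least (q+3)/2 - 2λ. -/

import Mathlib

open Finset

/-- The negacyclic shift of a word: `(c_0, ..., c_{n-1}) ↦ (-c_{n-1}, c_0, ..., c_{n-2})`. -/
def negashift {F : Type*} [Neg F] {n : ℕ} (c : Fin n → F) : Fin n → F :=
  fun i =>
    if _h : (i : ℕ) = 0 then -c ⟨n - 1, Nat.sub_lt i.pos Nat.one_pos⟩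
    else c ⟨(i : ℕ) - 1, lt_of_le_of_lt (Nat.sub_le _ _) i.isLt⟩

/-- A linear code `C ≤ F^n` is negacyclic if it is closed under the negacyclic shift. -/
def IsNegacyclic {F : Type*} [Field F] {n : ℕ} (C : Submodule F (Fin n → F)) : Prop :=
  ∀ c ∈ C, negashift c ∈ C

/-- `C` is an LCD code: `C ∩ C^⊥ = {0}` for the Euclidean inner product. -/
def IsLCD {F : Type*} [Field F] {n : ℕ} (C : Submodule F (Fin n → F)) : Prop :=
  ∀ x ∈ C, (∀ y ∈ C, ∑ i, x i * y i = 0) → x = 0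

/-- `C` is a Hermitian LCD code: `C ∩ C^{⊥H} = {0}` for the Hermitian inner product
`⟨x, y⟩ = ∑ x_i y_i^q`. -/
def IsHermLCD (q : ℕ) {F : Type*} [Field F] {n : ℕ} (C : Submodule F (Fin n → F)) : Prop :=
  ∀ x ∈ C, (∀ y ∈ C, ∑ i, x i * (y i) ^ q = 0) → x = 0

open scoped Classical in
/-- The Hamming weight of a word. -/
noncomputable def wt {F : Type*} [Zero F] {n : ℕ} (c : Fin n → F) : ℕ :=
  (Finset.univ.filter fun i => c i ≠ 0).card

/-- The minimum distance of the code `C` is exactly `d`: `d` is the least Hamming weight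
of a nonzero codeword. -/
def HasMinDist {F : Type*} [Zero F] {n : ℕ} (C : Set (Fin n → F)) (d : ℕ) : Prop :=
  IsLeast {w : ℕ | ∃ c ∈ C, c ≠ 0 ∧ wt c = w} d

open Polynomial Finset

section PV

variable {F : Type*} [Field F] {n : ℕ}

/-- The polynomial associated to a vector of coefficients. -/
noncomputable def pv (c : Fin n → F) : Polynomial F :=
  ∑ j : Fin n, Polynomial.C (c j) * Polynomial.X ^ (j : ℕ)

theorem pv_coeff (c : Fin n → F) (k : ℕ) :
    (pv c).coeff k = if h : k < n then c ⟨k, h⟩ else 0 := by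
  rw [pv, finset_sum_coeff]
  simp only [coeff_C_mul, coeff_X_pow]
  split
  · next h =>
    rw [Finset.sum_eq_single (⟨k, h⟩ : Fin n)]
    · simp
    · intro b _ hb
      have : ¬ ((k : ℕ) = (b : ℕ)) := fun hh => hb (by ext; simp [hh.symm])
      simp [this]
    · simp
  · next h =>
    apply Finset.sum_eq_zero
    intro b _
    have : ¬ ((k : ℕ) = (b : ℕ)) := fun hh => h (hh ▸ b.isLt)
    simp [this]

theorem pv_degree_lt (c : Fin n → F) : (pv c).degree < (n : WithBot ℕ) := by
  by_cases hn : pv c = 0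
  · rw [hn, degree_zero]
    exact WithBot.bot_lt_coe n
  · rw [degree_lt_iff_coeff_zero]
    intro k hk
    rw [pv_coeff]
    have : ¬ k < n := by exact_mod_cast not_lt.2 hk
    simp [this]

theorem pv_mem_degreeLT (c : Fin n → F) : pv c ∈ degreeLT F n := by
  rw [Polynomial.mem_degreeLT]; exact pv_degree_lt c

theorem pv_eq_zero_iff {c : Fin n → F} : pv c = 0 ↔ c = 0 := by
  constructor
  · intro h
    funext j
    have := pv_coeff c j
    rw [h] at this
    simpa [j.isLt] using this.symm
  · intro h; rw [h, pv]; simp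

theorem pv_of_coeff {f : Polynomial F} (hf : f.degree < (n : WithBot ℕ)) :
    pv (fun j : Fin n => f.coeff (j : ℕ)) = f := by
  ext k
  rw [pv_coeff]
  split
  · rfl
  · next h =>
    symm
    apply coeff_eq_zero_of_degree_lt
    refine lt_of_lt_of_le hf ?_
    exact_mod_cast Nat.cast_le.2 (not_lt.1 h)

theorem pv_add (x y : Fin n → F) : pv (x + y) = pv x + pv y := by
  rw [pv, pv, pv, ← Finset.sum_add_distrib]
  refine Finset.sum_congr rfl fun j _ => ?_
  simp [add_mul]

theorem pv_smul (r : F) (x : Fin n → F) : pv (r • x) = Polynomial.C r * pv x := by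
  rw [pv, pv, Finset.mul_sum]
  refine Finset.sum_congr rfl fun j _ => ?_
  simp [mul_assoc]

theorem pv_map_eval {K : Type*} [Field K] (ι : F →+* K) (c : Fin n → F) (z : K) :
    ((pv c).map ι).eval z = ∑ j : Fin n, ι (c j) * z ^ (j : ℕ) := by
  rw [pv, Polynomial.map_sum, Polynomial.eval_finset_sum]
  refine Finset.sum_congr rfl fun j _ => ?_
  simp

end PV

section RootsDvd

variable {K : Type*} [Field K]

theorem prod_X_sub_C_dvd_of_roots {ι' : Type*} [DecidableEq ι'] (S : Finset ι') (v : ι' → K)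
    (hv : Set.InjOn v S) {P : Polynomial K} (hP : P ≠ 0)
    (h : ∀ i ∈ S, P.eval (v i) = 0) : (∏ i ∈ S, (X - C (v i))) ∣ P := by
  classical
  have key : (∏ i ∈ S, (X - C (v i))) = ((S.val.map v).map fun a => X - C a).prod := by
    rw [Finset.prod, Multiset.map_map]
    rfl
  rw [key, Multiset.prod_X_sub_C_dvd_iff_le_roots hP]
  have hnd : (S.val.map v).Nodup := Multiset.Nodup.map_on (fun a ha b hb => hv ha hb) S.nodup
  rw [Multiset.le_iff_count]
  intro a
  by_cases ha : a ∈ S.val.map v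
  · refine le_trans (Multiset.nodup_iff_count_le_one.1 hnd a) ?_
    rw [Polynomial.count_roots, Nat.one_le_iff_ne_zero, ← Nat.pos_iff_ne_zero]
    refine (Polynomial.rootMultiplicity_pos hP).2 ?_
    obtain ⟨i, hi, rfl⟩ := Multiset.mem_map.1 ha
    exact h i hi
  · simp [Multiset.count_eq_zero_of_notMem ha]

end RootsDvd

section Descent

variable {F K : Type*} [Field F] [Fintype F] [Field K] {q : ℕ}

theorem fixed_mem_range (hF : Fintype.card F = q) (hq1 : 1 < q) (ι : F →+* K)
    {z : K} (hz : z ^ q = z) : z ∈ Set.range ι := by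
  classical
  set P : Polynomial K := X ^ q - X with hP
  have hPne : P ≠ 0 := by
    have : P.coeff q = 1 := by
      rw [hP, Polynomial.coeff_sub, Polynomial.coeff_X_pow, Polynomial.coeff_X]
      rw [if_pos rfl, if_neg (by omega : ¬ (1 = q))]
      ring
    intro h0
    rw [h0] at this
    simp at this
  have hroot : ∀ x : F, P.eval (ι x) = 0 := by
    intro x
    have : (ι x) ^ q = ι x := by
      rw [← map_pow, ← hF, FiniteField.pow_card]
    simp [hP, this]
  set A : Finset K := Finset.univ.image (fun x : F => ι x) with hA
  set B : Finset K := P.roots.toFinset with hB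
  have hAB : A ⊆ B := by
    intro a ha
    obtain ⟨x, _, rfl⟩ := Finset.mem_image.1 ha
    rw [hB, Multiset.mem_toFinset, Polynomial.mem_roots hPne]
    exact hroot x
  have hcardA : A.card = q := by
    rw [hA, Finset.card_image_of_injective _ ι.injective, Finset.card_univ, hF]
  have hcardB : B.card ≤ q := by
    refine le_trans (Multiset.toFinset_card_le _) (le_trans (Polynomial.card_roots' P) ?_)
    have h1 : P.natDegree ≤ q := le_trans (Polynomial.natDegree_sub_le _ _) (by
      simp [Polynomial.natDegree_X_pow, Polynomial.natDegree_X, Nat.le_of_lt hq1])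
    exact h1
  have hBA : A = B := Finset.eq_of_subset_of_card_le hAB (hcardB.trans hcardA.ge)
  have hzB : z ∈ B := by
    rw [hB, Multiset.mem_toFinset, Polynomial.mem_roots hPne]
    simp [hP, Polynomial.IsRoot, hz]
  rw [← hBA] at hzB
  obtain ⟨x, _, rfl⟩ := Finset.mem_image.1 hzB
  exact ⟨x, rfl⟩

theorem descend (hF : Fintype.card F = q) (hq1 : 1 < q) (ι : F →+* K)
    {P : Polynomial K} (h : ∀ k, (P.coeff k) ^ q = P.coeff k) :
    ∃ P₀ : Polynomial F, P₀.map ι = P := by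
  have : P ∈ Polynomial.lifts ι := by
    rw [Polynomial.lifts_iff_coeff_lifts]
    exact fun k => fixed_mem_range hF hq1 ι (h k)
  rwa [Polynomial.mem_lifts] at this

end Descent

section Beta

variable {K : Type*} [Field K] {m : ℕ} {β : K}

theorem beta_reduce (hβ : IsPrimitiveRoot β (8 * m)) {A B k : ℕ} (h : A = B + 8 * m * k) :
    β ^ A = β ^ B := by
  rw [h, pow_add, pow_mul, hβ.pow_eq_one, one_pow, mul_one]

theorem beta_n_eq_neg_one (hβ : IsPrimitiveRoot β (8 * m)) (hm : 0 < m) :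
    β ^ (4 * m) = -1 := by
  have hsq : (β ^ (4 * m)) ^ 2 = 1 := by
    rw [← pow_mul]
    have : 4 * m * 2 = 8 * m := by ring
    rw [this, hβ.pow_eq_one]
  have hne : β ^ (4 * m) ≠ 1 := hβ.pow_ne_one_of_pos_of_lt (by omega) (by omega)
  have hfac : (β ^ (4 * m) - 1) * (β ^ (4 * m) + 1) = 0 := by
    have hh : (β ^ (4 * m) - 1) * (β ^ (4 * m) + 1) = (β ^ (4 * m)) ^ 2 - 1 := by ring
    rw [hh, hsq, sub_self]
  rcases mul_eq_zero.1 hfac with h | h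
  · exact absurd (sub_eq_zero.1 h) hne
  · exact eq_neg_of_add_eq_zero_left h

theorem inner_char (hβ : IsPrimitiveRoot β (8 * m)) (hm : 0 < m) {j k : ℕ}
    (hj : j < 4 * m) (hk : k < 4 * m) :
    ∑ t ∈ Finset.range (4 * m), β ^ ((2 * t + 1) * j + (8 * m - (2 * t + 1)) * k)
      = if j = k then ((4 * m : ℕ) : K) else 0 := by
  have hterm : ∀ t ∈ Finset.range (4 * m),
      β ^ ((2 * t + 1) * j + (8 * m - (2 * t + 1)) * k)
        = β ^ (j + (8 * m - 1) * k) * (β ^ (2 * j + (8 * m - 2) * k)) ^ t := by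
    intro t ht
    rw [← pow_mul, ← pow_add]
    refine (beta_reduce hβ (k := t * k) ?_).symm
    have h1 : 2 * t + 1 ≤ 8 * m := by
      rw [Finset.mem_range] at ht; omega
    zify [h1, (by omega : (1:ℕ) ≤ 8 * m), (by omega : (2:ℕ) ≤ 8 * m)]
    ring
  rw [Finset.sum_congr rfl hterm, ← Finset.mul_sum]
  by_cases hjk : j = k
  · subst hjk
    have h1 : β ^ (2 * j + (8 * m - 2) * j) = 1 := by
      refine hβ.pow_eq_one_iff_dvd _ |>.2 ⟨j, by zify [(by omega : (2:ℕ) ≤ 8*m)]; ring⟩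
    have h2 : β ^ (j + (8 * m - 1) * j) = 1 := by
      refine hβ.pow_eq_one_iff_dvd _ |>.2 ⟨j, by zify [(by omega : (1:ℕ) ≤ 8*m)]; ring⟩
    simp [h1, h2]
  · have hδ : β ^ (2 * j + (8 * m - 2) * k) ≠ 1 := by
      intro hone
      obtain ⟨c, hc⟩ := (hβ.pow_eq_one_iff_dvd _).1 hone
      apply hjk
      have : (4 * m : ℤ) ∣ ((j : ℤ) - k) := by
        have hc' : (2 : ℤ) * j + (8 * m - 2) * k = 8 * m * c := by
          zify [(by omega : (2:ℕ) ≤ 8*m)] at hc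
          linarith
        refine ⟨c - k, ?_⟩
        have h2 : (2:ℤ) * ((j:ℤ) - k) = 2 * (4 * m * (c - k)) := by linear_combination hc'
        linarith
      have habs : |(j : ℤ) - k| < 4 * m := by
        rw [abs_lt]; constructor <;> [omega; omega]
      have := Int.eq_zero_of_abs_lt_dvd this habs
      omega
    have hgeom : ∑ t ∈ Finset.range (4 * m), (β ^ (2 * j + (8 * m - 2) * k)) ^ t = 0 := by
      rw [geom_sum_eq hδ]
      have : (β ^ (2 * j + (8 * m - 2) * k)) ^ (4 * m) = 1 := by
        rw [← pow_mul]
        refine hβ.pow_eq_one_iff_dvd _ |>.2 ⟨j + (4 * m - 1) * k, ?_⟩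
        zify [(by omega : (2:ℕ) ≤ 8*m), (by omega : (1:ℕ) ≤ 4*m)]
        ring
      rw [this, sub_self, zero_div]
    simp [hjk, hgeom]

end Beta

section Gee

variable {K : Type*} [Field K]

/-- The generator polynomial. -/
noncomputable def geePoly (β : K) (m lam s : ℕ) : Polynomial K :=
  (∏ t ∈ Finset.range (2*s), (X - C (β ^ (2*(lam+t)+1)))) *
    (∏ t ∈ Finset.range (2*s), (X - C (β ^ (4*m + 2*(lam+t)+1))))

/-- All odd residues `< 8m`. -/
def EallF (m : ℕ) : Finset ℕ := (Finset.range (4*m)).image (fun t => 2*t+1)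

/-- The defining set of the code. -/
def ZgF (m lam s : ℕ) : Finset ℕ :=
  ((Finset.range (2*s)).image (fun t => 2*(lam+t)+1)) ∪
    ((Finset.range (2*s)).image (fun t => 4*m + 2*(lam+t)+1))

theorem mem_EallF {m i : ℕ} : i ∈ EallF m ↔ i % 2 = 1 ∧ i < 8 * m := by
  simp only [EallF, Finset.mem_image, Finset.mem_range]
  constructor
  · rintro ⟨t, ht, rfl⟩; omega
  · rintro ⟨h1, h2⟩; exact ⟨i / 2, by omega, by omega⟩

variable {m lam s q : ℕ} (hms : lam + s = m) (hs1 : 1 ≤ s) (hlam1 : 1 ≤ lam)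
  (hq4 : q + 1 = 4 * m)

include hms hs1 hlam1 in
theorem ZgF_subset_EallF : ZgF m lam s ⊆ EallF m := by
  intro i hi
  rw [mem_EallF]
  simp only [ZgF, Finset.mem_union, Finset.mem_image, Finset.mem_range] at hi
  rcases hi with ⟨t, ht, rfl⟩ | ⟨t, ht, rfl⟩ <;> omega

include hms in
theorem compl_mem_ZgF {i : ℕ} (hi : i ∈ ZgF m lam s) : 8 * m - i ∈ ZgF m lam s := by
  simp only [ZgF, Finset.mem_union, Finset.mem_image, Finset.mem_range] at hi ⊢
  rcases hi with ⟨t, ht, rfl⟩ | ⟨t, ht, rfl⟩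
  · exact Or.inr ⟨2*s-1-t, by omega, by omega⟩
  · exact Or.inl ⟨2*s-1-t, by omega, by omega⟩

include hms hq4 in
theorem key_f1 {t t' : ℕ} (h : t + t' + 1 = 2 * s) :
    q * (2*(lam+t)+1) = (2*(lam+t')+1) + 8*m*(lam+t) := by
  have hq' : (q : ℤ) = 4 * m - 1 := by omega
  have hl' : (lam : ℤ) = m - s := by omega
  have ht' : (t' : ℤ) = 2 * s - 1 - t := by omega
  zify
  rw [hq', hl', ht']
  ring

include hms hq4 in
theorem key_f2 {t t' : ℕ} (h : t + t' + 1 = 2 * s) :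
    q * (4*m + 2*(lam+t)+1) = (4*m + 2*(lam+t')+1) + 8*m*(lam+t+2*m-1) := by
  have hq' : (q : ℤ) = 4 * m - 1 := by omega
  have hl' : (lam : ℤ) = m - s := by omega
  have ht' : (t' : ℤ) = 2 * s - 1 - t := by omega
  have hm1 : (1:ℕ) ≤ m := by omega
  zify [show (1:ℕ) ≤ lam + t + 2*m by omega]
  rw [hq', hl', ht']
  ring

include hms hs1 hlam1 hq4 in
theorem sigma_mem_ZgF {i : ℕ} (hi : i ∈ ZgF m lam s) : (q * i) % (8*m) ∈ ZgF m lam s := by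
  have hm1 : 1 ≤ m := by omega
  simp only [ZgF, Finset.mem_union, Finset.mem_image, Finset.mem_range] at hi ⊢
  rcases hi with ⟨t, ht, rfl⟩ | ⟨t, ht, rfl⟩
  · refine Or.inl ⟨2*s-1-t, by omega, ?_⟩
    rw [key_f1 hms hq4 (t' := 2*s-1-t) (by omega), Nat.add_mul_mod_self_left,
      Nat.mod_eq_of_lt (by omega)]
  · refine Or.inr ⟨2*s-1-t, by omega, ?_⟩
    rw [key_f2 hms hq4 (t' := 2*s-1-t) (by omega), Nat.add_mul_mod_self_left,
      Nat.mod_eq_of_lt (by omega)]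

include hms hs1 hq4 in
theorem sigma_invol {i : ℕ} (hodd : i % 2 = 1) (hlt : i < 8 * m) :
    (q * ((q * i) % (8*m))) % (8*m) = i := by
  have hm1 : 1 ≤ m := by omega
  have h1 : (q * ((q * i) % (8*m))) % (8*m) = (q * (q * i)) % (8*m) :=
    Nat.ModEq.mul_left q (Nat.mod_modEq _ _)
  have key : q * (q * i) = i + 8*m*((2*m-1)*i) := by
    have hq' : (q : ℤ) = 4 * m - 1 := by omega
    zify [show (1:ℕ) ≤ 2*m by omega]
    rw [hq']
    ring
  rw [h1, key, Nat.add_mul_mod_self_left, Nat.mod_eq_of_lt hlt]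

include hq4 in
theorem sigma_odd_lt {i : ℕ} (hodd : i % 2 = 1) (hlt : i < 8 * m) :
    ((q * i) % (8*m)) % 2 = 1 ∧ (q * i) % (8*m) < 8 * m := by
  have hm1 : 1 ≤ m := by omega
  refine ⟨?_, Nat.mod_lt _ (by omega)⟩
  have hodd2 : (q * i) % 2 = 1 := by
    rw [Nat.mul_mod, (by omega : q % 2 = 1), hodd]
  obtain ⟨k, hk⟩ : ∃ k, q * i = (8*m) * k + (q*i) % (8*m) :=
    ⟨q*i/(8*m), (Nat.div_add_mod _ _).symm⟩
  have h2 : (8*m)*k % 2 = 0 := by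
    obtain ⟨b, hb⟩ : ∃ b, (8*m)*k = 2*b := ⟨4*m*k, by ring⟩
    omega
  omega

include hq4 in
theorem sigma_ne_self {i : ℕ} (hodd : i % 2 = 1) (hlt : i < 8 * m) :
    (q * i) % (8*m) ≠ i := by
  intro h
  have hm1 : 1 ≤ m := by omega
  have h2 : (q * i) % (8 * m) = i % (8 * m) := by rw [h, Nat.mod_eq_of_lt hlt]
  have h3 : (8 * m : ℤ) ∣ (q * i - i : ℤ) := by
    have := (Nat.modEq_iff_dvd (n := 8*m) (a := i) (b := q * i)).1 h2.symm
    exact_mod_cast this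
  obtain ⟨k, hk⟩ := h3
  obtain ⟨r, hr⟩ : ∃ r, i = 2*r+1 := ⟨i/2, by omega⟩
  have h4 : (4 : ℤ) ∣ 2 := by
    refine ⟨2*m*r + m - r - 2*m*k, ?_⟩
    have hq' : (q : ℤ) = 4 * m - 1 := by omega
    have hr' : (i : ℤ) = 2*r+1 := by exact_mod_cast hr
    rw [hq', hr'] at hk
    linear_combination -hk
  norm_num at h4

end Gee

section Gee2

variable {K : Type*} [Field K] {β : K} {m lam s q : ℕ}

theorem isCoprime_X_sub_C_of_ne {a b : K} (h : a ≠ b) :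
    IsCoprime (X - C a) (X - C b) := by
  have hinj : Function.Injective (fun i : Fin 2 => if i = 0 then a else b) := by
    intro i j hij
    fin_cases i <;> fin_cases j <;> simp_all
  have := Polynomial.pairwise_coprime_X_sub_C hinj (show (0 : Fin 2) ≠ 1 by decide)
  simpa [Function.onFun] using this

theorem gee_monic : (geePoly β m lam s).Monic := by
  refine Polynomial.Monic.mul ?_ ?_ <;>
  exact Polynomial.monic_prod_of_monic _ _ (fun t _ => Polynomial.monic_X_sub_C _)

theorem gee_natDegree : (geePoly β m lam s).natDegree = 4 * s := by
  rw [geePoly, Polynomial.natDegree_mul (Polynomial.monic_prod_of_monic _ _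
      (fun t _ => Polynomial.monic_X_sub_C _)).ne_zero
      (Polynomial.monic_prod_of_monic _ _ (fun t _ => Polynomial.monic_X_sub_C _)).ne_zero,
    Polynomial.natDegree_prod _ _ (fun t _ => Polynomial.X_sub_C_ne_zero _),
    Polynomial.natDegree_prod _ _ (fun t _ => Polynomial.X_sub_C_ne_zero _)]
  simp only [Polynomial.natDegree_X_sub_C, Finset.sum_const, smul_eq_mul, mul_one,
    Finset.card_range]
  omega

variable (hms : lam + s = m) (hs1 : 1 ≤ s) (hlam1 : 1 ≤ lam) (hq4 : q + 1 = 4 * m)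
  (hβ : IsPrimitiveRoot β (8 * m))

include hms hs1 hlam1 hq4 hβ in
theorem map_phi_gee (φ : K →+* K) (hφ : ∀ z : K, φ z = z ^ q) :
    (geePoly β m lam s).map φ = geePoly β m lam s := by
  rw [geePoly, Polynomial.map_mul, Polynomial.map_prod, Polynomial.map_prod]
  congr 1
  · rw [← Finset.prod_range_reflect (fun t => X - C (β ^ (2*(lam+t)+1))) (2*s)]
    refine Finset.prod_congr rfl fun t ht => ?_
    rw [Finset.mem_range] at ht
    rw [Polynomial.map_sub, Polynomial.map_X, Polynomial.map_C, hφ, ← pow_mul']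
    congr 2
    exact beta_reduce hβ (key_f1 hms hq4 (t' := 2*s-1-t) (by omega))
  · rw [← Finset.prod_range_reflect (fun t => X - C (β ^ (4*m + 2*(lam+t)+1))) (2*s)]
    refine Finset.prod_congr rfl fun t ht => ?_
    rw [Finset.mem_range] at ht
    rw [Polynomial.map_sub, Polynomial.map_X, Polynomial.map_C, hφ, ← pow_mul']
    congr 2
    exact beta_reduce hβ (key_f2 hms hq4 (t' := 2*s-1-t) (by omega))

include hms hs1 hlam1 hβ in
theorem gee_coprime : IsCoprime (∏ t ∈ Finset.range (2*s), (X - C (β ^ (2*(lam+t)+1))))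
    (∏ t ∈ Finset.range (2*s), (X - C (β ^ (4*m + 2*(lam+t)+1)))) := by
  refine IsCoprime.prod_left fun t ht => IsCoprime.prod_right fun u hu => ?_
  rw [Finset.mem_range] at ht hu
  refine isCoprime_X_sub_C_of_ne fun hc => ?_
  have := hβ.pow_inj (i := 2*(lam+t)+1) (j := 4*m + 2*(lam+u)+1) (by omega) (by omega) hc
  omega

include hms hs1 hlam1 hβ in
theorem gee_dvd_e {P : Polynomial K} (hP : P ≠ 0)
    (h1 : ∀ t, t < 2*s → P.eval (β ^ (2*(lam+t)+1)) = 0)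
    (h2 : ∀ t, t < 2*s → P.eval (β ^ (4*m + 2*(lam+t)+1)) = 0) :
    geePoly β m lam s ∣ P := by
  classical
  refine IsCoprime.mul_dvd (gee_coprime hms hs1 hlam1 hβ) ?_ ?_
  · refine prod_X_sub_C_dvd_of_roots _ _ ?_ hP (fun t ht => h1 t (Finset.mem_range.1 ht))
    intro t ht u hu hc
    simp only [Finset.coe_range, Set.mem_Iio] at ht hu
    have := hβ.pow_inj (i := 2*(lam+t)+1) (j := 2*(lam+u)+1) (by omega) (by omega) hc
    omega
  · refine prod_X_sub_C_dvd_of_roots _ _ ?_ hP (fun t ht => h2 t (Finset.mem_range.1 ht))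
    intro t ht u hu hc
    simp only [Finset.coe_range, Set.mem_Iio] at ht hu
    have := hβ.pow_inj (i := 4*m + 2*(lam+t)+1) (j := 4*m + 2*(lam+u)+1)
      (by omega) (by omega) hc
    omega

include hms hs1 hlam1 hβ in
theorem gee_dvd_Xn : geePoly β m lam s ∣ (X ^ (4*m) + 1 : Polynomial K) := by
  have hm1 : 1 ≤ m := by omega
  have hne : (X ^ (4*m) + 1 : Polynomial K) ≠ 0 := by
    intro h
    have := congrArg (Polynomial.eval 0) h
    simp [zero_pow (by omega : 4*m ≠ 0)] at this
  have hroot : ∀ i : ℕ, i % 2 = 1 → Polynomial.eval (β ^ i) (X ^ (4*m) + 1 : Polynomial K) = 0 := by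
    intro i hiodd
    have : (β ^ i) ^ (4*m) = -1 := by
      rw [← pow_mul]
      have hb4 : β ^ (4*m) = -1 := beta_n_eq_neg_one hβ (by omega)
      calc β ^ (i * (4*m)) = β ^ (4*m) := by
            obtain ⟨c, hc⟩ : ∃ c, i = 2*c+1 := ⟨(i-1)/2, by omega⟩
            refine beta_reduce hβ (k := c) ?_
            rw [hc]
            ring
        _ = -1 := hb4
    simp [this]
  refine gee_dvd_e hms hs1 hlam1 hβ hne ?_ ?_
  · exact fun t ht => hroot _ (by omega)
  · exact fun t ht => hroot _ (by omega)

end Gee2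

section EPoly

variable {K : Type*} [Field K] {β : K} {m lam s q : ℕ}

/-- The auxiliary polynomial vanishing at all odd powers except two. -/
noncomputable def ePoly (β : K) (m i₀ i₁ : ℕ) : Polynomial K :=
  ∏ i ∈ EallF m \ {i₀, i₁}, (X - C (β ^ i))

variable (hms : lam + s = m) (hs1 : 1 ≤ s) (hlam1 : 1 ≤ lam) (hq4 : q + 1 = 4 * m)
  (hβ : IsPrimitiveRoot β (8 * m))

theorem ePoly_monic (i₀ i₁ : ℕ) : (ePoly β m i₀ i₁).Monic :=
  Polynomial.monic_prod_of_monic _ _ (fun t _ => Polynomial.monic_X_sub_C _)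

include hq4 in
theorem card_EallF : (EallF m).card = 4 * m := by
  rw [EallF, Finset.card_image_of_injective _ (fun a b h => by omega), Finset.card_range]

include hq4 in
theorem ePoly_natDegree {i₀ i₁ : ℕ} (h0 : i₀ ∈ EallF m) (h1 : i₁ ∈ EallF m) (hne : i₀ ≠ i₁) :
    (ePoly β m i₀ i₁).natDegree = 4 * m - 2 := by
  have hsub : {i₀, i₁} ⊆ EallF m := by
    intro x hx; simp only [Finset.mem_insert, Finset.mem_singleton] at hx
    rcases hx with rfl | rfl <;> assumption
  have hcard : (EallF m \ {i₀, i₁}).card = 4 * m - 2 := by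
    rw [Finset.card_sdiff_of_subset hsub, card_EallF hq4, Finset.card_insert_of_notMem (by simpa using hne),
      Finset.card_singleton]
  rw [ePoly, Polynomial.natDegree_prod _ _ (fun t _ => Polynomial.X_sub_C_ne_zero _)]
  simp only [Polynomial.natDegree_X_sub_C, Finset.sum_const, smul_eq_mul, mul_one]
  rw [hcard]

include hq4 hβ in
theorem beta_sigma_pow {i : ℕ} : (β ^ i) ^ q = β ^ ((q * i) % (8 * m)) := by
  have horder : orderOf β = 8 * m := (hβ.eq_orderOf).symm
  rw [← pow_mul', ← horder, pow_mod_orderOf]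

include hms hs1 hq4 hβ in
theorem map_phi_ePoly (φ : K →+* K) (hφ : ∀ z : K, φ z = z ^ q)
    {i₀ i₁ : ℕ} (h0 : i₀ % 2 = 1) (h0' : i₀ < 8 * m) (h1 : i₁ = (q * i₀) % (8 * m)) :
    (ePoly β m i₀ i₁).map φ = ePoly β m i₀ i₁ := by
  have hm1 : 1 ≤ m := by omega
  rw [ePoly, Polynomial.map_prod]
  have hmem : ∀ i ∈ EallF m \ ({i₀, i₁} : Finset ℕ), (q * i) % (8 * m) ∈ EallF m \ {i₀, i₁} := by
    intro i hi
    rw [Finset.mem_sdiff, mem_EallF] at hi ⊢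
    obtain ⟨⟨hiodd, hilt⟩, hnot⟩ := hi
    refine ⟨sigma_odd_lt hq4 hiodd hilt, ?_⟩
    simp only [Finset.mem_insert, Finset.mem_singleton] at hnot ⊢
    push_neg at hnot ⊢
    obtain ⟨hn0, hn1⟩ := hnot
    constructor
    · intro hcon
      apply hn1
      rw [h1, ← hcon, sigma_invol hms hs1 hq4 hiodd hilt]
    · intro hcon
      apply hn0
      have := congrArg (fun z => (q * z) % (8 * m)) hcon
      rw [sigma_invol hms hs1 hq4 hiodd hilt, h1] at this
      rw [sigma_invol hms hs1 hq4 h0 h0'] at this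
      exact this
  refine Finset.prod_bij' (fun i _ => (q * i) % (8 * m)) (fun i _ => (q * i) % (8 * m))
    hmem hmem ?_ ?_ ?_
  · intro i hi
    rw [Finset.mem_sdiff, mem_EallF] at hi
    exact sigma_invol hms hs1 hq4 hi.1.1 hi.1.2
  · intro i hi
    rw [Finset.mem_sdiff, mem_EallF] at hi
    exact sigma_invol hms hs1 hq4 hi.1.1 hi.1.2
  · intro i hi
    rw [Polynomial.map_sub, Polynomial.map_X, Polynomial.map_C, hφ,
      beta_sigma_pow hq4 hβ]

include hms hs1 hlam1 hq4 hβ in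
theorem gee_dvd_ePoly {i₀ i₁ : ℕ} (h0 : i₀ ∉ ZgF m lam s) (h1 : i₁ ∉ ZgF m lam s) :
    geePoly β m lam s ∣ ePoly β m i₀ i₁ := by
  classical
  have hroot : ∀ j ∈ EallF m \ ({i₀, i₁} : Finset ℕ), (ePoly β m i₀ i₁).eval (β ^ j) = 0 := by
    intro j hj
    rw [ePoly, Polynomial.eval_prod]
    exact Finset.prod_eq_zero hj (by simp)
  have hZsub : ∀ j ∈ ZgF m lam s, j ∈ EallF m \ ({i₀, i₁} : Finset ℕ) := by
    intro j hj
    rw [Finset.mem_sdiff]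
    refine ⟨ZgF_subset_EallF hms hs1 hlam1 hj, ?_⟩
    simp only [Finset.mem_insert, Finset.mem_singleton]
    rintro (rfl | rfl)
    · exact h0 hj
    · exact h1 hj
  refine gee_dvd_e hms hs1 hlam1 hβ (ePoly_monic i₀ i₁).ne_zero ?_ ?_
  · intro t ht
    refine hroot _ (hZsub _ ?_)
    simp only [ZgF, Finset.mem_union, Finset.mem_image, Finset.mem_range]
    exact Or.inl ⟨t, ht, rfl⟩
  · intro t ht
    refine hroot _ (hZsub _ ?_)
    simp only [ZgF, Finset.mem_union, Finset.mem_image, Finset.mem_range]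
    exact Or.inr ⟨t, ht, rfl⟩

include hβ in
theorem ePoly_eval_ne_zero {i₀ i₁ τ : ℕ} (hτ : τ % 2 = 1) (hτlt : τ < 8 * m)
    (hτmem : τ ∈ ({i₀, i₁} : Finset ℕ)) :
    (ePoly β m i₀ i₁).eval (β ^ τ) ≠ 0 := by
  rw [ePoly, Polynomial.eval_prod]
  rw [Finset.prod_ne_zero_iff]
  intro i hi
  rw [Finset.mem_sdiff, mem_EallF] at hi
  simp only [Polynomial.eval_sub, Polynomial.eval_X, Polynomial.eval_C]
  intro hcon
  rw [sub_eq_zero] at hcon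
  have := hβ.pow_inj (i := τ) (j := i) hτlt hi.1.2 hcon
  exact hi.2 (this ▸ hτmem)

end EPoly

section Parseval

variable {F K : Type*} [Field F] [Field K] {β : K} {m q : ℕ}

theorem parseval (hβ : IsPrimitiveRoot β (8 * m)) (hq4 : q + 1 = 4 * m)
    (ι : F →+* K) (x y : Fin (q+1) → F) :
    ∑ t ∈ Finset.range (4*m),
        (((pv x).map ι).eval (β ^ (2*t+1))) * (((pv y).map ι).eval (β ^ (8*m - (2*t+1))))
      = ((4*m : ℕ) : K) * ι (∑ j, x j * y j) := by
  have hm1 : 1 ≤ m := by omega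
  have hterm : ∀ t ∈ Finset.range (4*m),
      (((pv x).map ι).eval (β ^ (2*t+1))) * (((pv y).map ι).eval (β ^ (8*m - (2*t+1))))
        = ∑ j : Fin (q+1), ∑ k : Fin (q+1),
            (ι (x j) * ι (y k)) * β ^ ((2*t+1) * (j:ℕ) + (8*m - (2*t+1)) * (k:ℕ)) := by
    intro t ht
    rw [pv_map_eval, pv_map_eval, Finset.sum_mul_sum]
    refine Finset.sum_congr rfl fun j _ => Finset.sum_congr rfl fun k _ => ?_
    rw [← pow_mul, ← pow_mul, mul_mul_mul_comm, ← pow_add]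
  rw [Finset.sum_congr rfl hterm]
  rw [Finset.sum_comm]
  have hswap : ∀ j : Fin (q+1),
      ∑ t ∈ Finset.range (4*m), ∑ k : Fin (q+1),
          (ι (x j) * ι (y k)) * β ^ ((2*t+1) * (j:ℕ) + (8*m - (2*t+1)) * (k:ℕ))
        = ∑ k : Fin (q+1), ∑ t ∈ Finset.range (4*m),
            (ι (x j) * ι (y k)) * β ^ ((2*t+1) * (j:ℕ) + (8*m - (2*t+1)) * (k:ℕ)) :=
    fun j => Finset.sum_comm

  rw [Finset.sum_congr rfl (fun j _ => hswap j)]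
  have hinner : ∀ j k : Fin (q+1),
      ∑ t ∈ Finset.range (4*m),
          (ι (x j) * ι (y k)) * β ^ ((2*t+1) * (j:ℕ) + (8*m - (2*t+1)) * (k:ℕ))
        = (ι (x j) * ι (y k)) * (if (j:ℕ) = (k:ℕ) then ((4*m : ℕ) : K) else 0) := by
    intro j k
    rw [← Finset.mul_sum, inner_char hβ (by omega) (by omega : (j:ℕ) < 4*m)
      (by omega : (k:ℕ) < 4*m)]
  rw [Finset.sum_congr rfl (fun j _ => Finset.sum_congr rfl (fun k _ => hinner j k))]
  have hdiag : ∀ j : Fin (q+1),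
      ∑ k : Fin (q+1), (ι (x j) * ι (y k)) * (if (j:ℕ) = (k:ℕ) then ((4*m : ℕ) : K) else 0)
        = ι (x j * y j) * ((4*m : ℕ) : K) := by
    intro j
    rw [Finset.sum_eq_single j]
    · simp [map_mul]
    · intro k _ hk
      have : ¬ ((j:ℕ) = (k:ℕ)) := fun hh => hk (Fin.ext hh).symm
      simp [this]
    · simp
  rw [Finset.sum_congr rfl (fun j _ => hdiag j), ← Finset.sum_mul, mul_comm, ← map_sum]

end Parseval

section Negashift

variable {F : Type*} [Field F] {q : ℕ}

theorem pv_negashift (c : Fin (q+1) → F) :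
    pv (negashift c) = X * pv c - C (c ⟨q, Nat.lt_succ_self q⟩) * (X^(q+1) + 1) := by
  ext k
  rw [pv_coeff]
  cases k with
  | zero =>
    have h0 : (0 : ℕ) < q + 1 := Nat.succ_pos q
    rw [dif_pos h0]
    have hL : negashift c ⟨0, h0⟩ = -c ⟨q, Nat.lt_succ_self q⟩ := by
      rw [negashift]
      simp only [dif_pos rfl]
      congr 1
    rw [hL, Polynomial.coeff_sub, Polynomial.mul_coeff_zero, Polynomial.coeff_X_zero,
      Polynomial.coeff_C_mul, Polynomial.coeff_add, Polynomial.coeff_X_pow, Polynomial.coeff_one]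
    simp [Nat.succ_ne_zero]
  | succ k =>
    rw [Polynomial.coeff_sub, Polynomial.coeff_X_mul, Polynomial.coeff_C_mul,
      Polynomial.coeff_add, Polynomial.coeff_X_pow, Polynomial.coeff_one, pv_coeff]
    by_cases hk : k + 1 < q + 1
    · rw [dif_pos hk, dif_pos (by omega : k < q + 1)]
      have hL : negashift c ⟨k+1, hk⟩ = c ⟨k, by omega⟩ := by
        rw [negashift]
        simp only [dif_neg (Nat.succ_ne_zero k)]
        exact congrArg c (Fin.ext (by simp))
      rw [hL]
      rw [if_neg (by omega : ¬ (k + 1 = 0)), if_neg (by omega : ¬ (k + 1 = q + 1))]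
      ring
    · rw [dif_neg hk]
      by_cases hq : k + 1 = q + 1
      · rw [dif_pos (by omega : k < q + 1)]
        rw [if_pos hq, if_neg (by omega : ¬ (k + 1 = 0))]
        have : (⟨k, by omega⟩ : Fin (q+1)) = ⟨q, Nat.lt_succ_self q⟩ := by
          simp only [Fin.mk.injEq]; omega
        rw [this]
        ring
      · rw [dif_neg (by omega : ¬ (k < q + 1))]
        rw [if_neg hq, if_neg (by omega : ¬ (k + 1 = 0))]
        ring

end Negashift

section MainCon

set_option maxHeartbeats 1000000

theorem beta_odd_pow_neg_one {K : Type*} [Field K] {β : K} {m : ℕ}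
    (hβ : IsPrimitiveRoot β (8 * m)) (hm1 : 1 ≤ m) {μ : ℕ} (hμ : μ % 2 = 1) :
    (β ^ μ) ^ (4 * m) = -1 := by
  rw [← pow_mul]
  have hb4 : β ^ (4*m) = -1 := beta_n_eq_neg_one hβ (by omega)
  calc β ^ (μ * (4*m)) = β ^ (4*m) := by
        obtain ⟨c, hc⟩ : ∃ c, μ = 2*c+1 := ⟨(μ-1)/2, by omega⟩
        refine beta_reduce hβ (k := c) ?_
        rw [hc]; ring
    _ = -1 := hb4

theorem main_con {F K : Type*} [Field F] [Fintype F] [Field K]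
    (ι : F →+* K) (φ : K →+* K) {q m lam s : ℕ} {β : K}
    (hq4 : q + 1 = 4 * m) (hms : lam + s = m) (hs1 : 1 ≤ s) (hlam1 : 1 ≤ lam)
    (hF : Fintype.card F = q) (hβ : IsPrimitiveRoot β (8 * m))
    (hφ : ∀ z : K, φ z = z ^ q) :
    ∃ C : Submodule F (Fin (q + 1) → F),
      IsNegacyclic C ∧ IsLCD C ∧ Module.finrank F C = 4 * lam ∧
      ∀ c ∈ C, c ≠ 0 → 2 * s + 1 ≤ wt c := by
  classical
  have hm1 : 1 ≤ m := by omega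
  have hm2 : 2 ≤ m := by omega
  have hq1 : 1 < q := by omega
  have hβne : β ≠ 0 := hβ.ne_zero (by omega)
  obtain ⟨g₀, hg₀⟩ := descend hF hq1 ι (P := geePoly β m lam s) (fun k => by
    have h1 := congrArg (fun P => Polynomial.coeff P k) (map_phi_gee hms hs1 hlam1 hq4 hβ φ hφ)
    simpa [Polynomial.coeff_map, hφ] using h1)
  have hg₀monic : g₀.Monic := by
    refine (Function.Injective.monic_map_iff ι.injective).2 ?_
    rw [hg₀]; exact gee_monic
  have hg₀ne : g₀ ≠ 0 := hg₀monic.ne_zero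
  have hg₀deg : g₀.natDegree = 4*s := by
    have h1 := hg₀monic.natDegree_map ι
    rw [hg₀, gee_natDegree] at h1
    exact h1.symm
  have hXn : g₀ ∣ (X^(q+1) + 1 : Polynomial F) := by
    rw [← Polynomial.map_dvd_map' ι, hg₀, Polynomial.map_add, Polynomial.map_pow,
      Polynomial.map_X, Polynomial.map_one, hq4]
    exact gee_dvd_Xn hms hs1 hlam1 hβ
  let Csub : Submodule F (Fin (q+1) → F) :=
    { carrier := {c | g₀ ∣ pv c}
      add_mem' := fun {a b} (ha : g₀ ∣ pv a) (hb : g₀ ∣ pv b) => by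
        show g₀ ∣ pv (a + b); rw [pv_add]; exact dvd_add ha hb
      zero_mem' := by
        show g₀ ∣ pv (0 : Fin (q+1) → F)
        rw [pv_eq_zero_iff.2 rfl]
        exact dvd_zero _
      smul_mem' := fun r a (ha : g₀ ∣ pv a) => by
        show g₀ ∣ pv (r • a); rw [pv_smul]; exact ha.mul_left _ }
  have hmem : ∀ c : Fin (q+1) → F, c ∈ Csub ↔ g₀ ∣ pv c := fun c => Iff.rfl
  have heval : ∀ c ∈ Csub, ∀ i ∈ ZgF m lam s, ((pv c).map ι).eval (β ^ i) = 0 := by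
    intro c hc i hi
    obtain ⟨h, hh⟩ := (hmem c).1 hc
    rw [hh, Polynomial.map_mul, hg₀, Polynomial.eval_mul]
    have hz : (geePoly β m lam s).eval (β ^ i) = 0 := by
      rw [geePoly, Polynomial.eval_mul, Polynomial.eval_prod, Polynomial.eval_prod]
      simp only [ZgF, Finset.mem_union, Finset.mem_image, Finset.mem_range] at hi
      rcases hi with ⟨t, ht, rfl⟩ | ⟨t, ht, rfl⟩
      · exact mul_eq_zero_of_left (Finset.prod_eq_zero (Finset.mem_range.2 ht) (by simp)) _
      · exact mul_eq_zero_of_right _ (Finset.prod_eq_zero (Finset.mem_range.2 ht) (by simp))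
    rw [hz, zero_mul]
  have hneg : IsNegacyclic Csub := by
    intro c hc
    rw [hmem] at hc ⊢
    rw [pv_negashift]
    exact dvd_sub (hc.mul_left X) (hXn.mul_left _)
  refine ⟨Csub, hneg, ?_, ?_, ?_⟩
  · -- LCD
    intro x hx horth
    have hEall : ∀ τ : ℕ, τ % 2 = 1 → τ < 8*m → ((pv x).map ι).eval (β ^ τ) = 0 := by
      intro τ hτodd hτlt
      by_cases hτZ : τ ∈ ZgF m lam s
      · exact heval x hx τ hτZ
      · set i₀ := 8*m - τ with hi₀
        have hi₀odd : i₀ % 2 = 1 := by omega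
        have hi₀lt : i₀ < 8*m := by omega
        set i₁ := (q * i₀) % (8*m) with hi₁
        have hi₁odd := (sigma_odd_lt hq4 hi₀odd hi₀lt).1
        have hi₁lt := (sigma_odd_lt hq4 hi₀odd hi₀lt).2
        have hi₀Z : i₀ ∉ ZgF m lam s := by
          intro hcon
          apply hτZ
          have h2 := compl_mem_ZgF hms hcon
          rwa [show 8*m - i₀ = τ by omega] at h2
        have hi₁Z : i₁ ∉ ZgF m lam s := by
          intro hcon
          apply hi₀Z
          have h2 := sigma_mem_ZgF hms hs1 hlam1 hq4 hcon
          rwa [hi₁, sigma_invol hms hs1 hq4 hi₀odd hi₀lt] at h2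
        have hi01 : i₀ ≠ i₁ := fun hcon => sigma_ne_self hq4 hi₀odd hi₀lt (hi₁ ▸ hcon.symm)
        obtain ⟨e₀, he₀⟩ := descend hF hq1 ι (P := ePoly β m i₀ i₁) (fun k => by
          have h1 := congrArg (fun P => Polynomial.coeff P k)
            (map_phi_ePoly hms hs1 hq4 hβ φ hφ hi₀odd hi₀lt hi₁)
          simpa [Polynomial.coeff_map, hφ] using h1)
        have he₀monic : e₀.Monic := by
          refine (Function.Injective.monic_map_iff ι.injective).2 ?_
          rw [he₀]; exact ePoly_monic i₀ i₁
        have he₀deg : e₀.degree < ((q+1:ℕ) : WithBot ℕ) := by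
          rw [Polynomial.degree_eq_natDegree he₀monic.ne_zero]
          have h1 := he₀monic.natDegree_map ι
          rw [he₀, ePoly_natDegree hq4 (mem_EallF.2 ⟨hi₀odd, hi₀lt⟩)
            (mem_EallF.2 ⟨hi₁odd, hi₁lt⟩) hi01] at h1
          rw [← h1, Nat.cast_lt]
          omega
        set y : Fin (q+1) → F := fun j => e₀.coeff (j:ℕ) with hy
        have hpvy : pv y = e₀ := pv_of_coeff he₀deg
        have hyC : y ∈ Csub := by
          rw [hmem, hpvy, ← Polynomial.map_dvd_map' ι, hg₀, he₀]
          exact gee_dvd_ePoly hms hs1 hlam1 hq4 hβ hi₀Z hi₁Z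
        have hy'C : negashift y ∈ Csub := hneg y hyC
        have hevaly : ∀ μ : ℕ, μ % 2 = 1 → μ < 8*m → μ ≠ i₀ → μ ≠ i₁ →
            ((pv y).map ι).eval (β ^ μ) = 0 := by
          intro μ h1 h2 h3 h4
          rw [hpvy, he₀, ePoly, Polynomial.eval_prod]
          refine Finset.prod_eq_zero (i := μ) ?_ (by simp)
          rw [Finset.mem_sdiff, mem_EallF]
          exact ⟨⟨h1, h2⟩, by simp [h3, h4]⟩
        have hBne : ((pv y).map ι).eval (β ^ i₀) ≠ 0 := by
          rw [hpvy, he₀]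
          exact ePoly_eval_ne_zero hβ hi₀odd hi₀lt (by simp)
        have hevalshift : ∀ μ : ℕ, μ % 2 = 1 →
            ((pv (negashift y)).map ι).eval (β ^ μ) = β ^ μ * ((pv y).map ι).eval (β ^ μ) := by
          intro μ hμ
          rw [pv_negashift]
          simp only [Polynomial.map_sub, Polynomial.map_mul, Polynomial.map_X, Polynomial.map_C,
            Polynomial.map_add, Polynomial.map_pow, Polynomial.map_one, Polynomial.eval_sub,
            Polynomial.eval_mul, Polynomial.eval_X, Polynomial.eval_C, Polynomial.eval_add,
            Polynomial.eval_pow, Polynomial.eval_one]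
          have hpow : (β ^ μ) ^ (q+1) = -1 := by
            rw [hq4]; exact beta_odd_pow_neg_one hβ hm1 hμ
          rw [hpow]
          ring
        obtain ⟨t₀, ht₀lt, ht₀⟩ : ∃ t₀, t₀ < 4*m ∧ 2*t₀+1 = τ := ⟨(τ-1)/2, by omega, by omega⟩
        obtain ⟨t₁, ht₁lt, ht₁⟩ : ∃ t₁, t₁ < 4*m ∧ 2*t₁+1 = 8*m - i₁ :=
          ⟨(8*m - i₁ - 1)/2, by omega, by omega⟩
        have ht01 : t₀ ≠ t₁ := by omega
        have hpairsub : ({t₀, t₁} : Finset ℕ) ⊆ Finset.range (4*m) := by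
          intro u hu
          simp only [Finset.mem_insert, Finset.mem_singleton] at hu
          rcases hu with rfl | rfl <;> simp [Finset.mem_range, ht₀lt, ht₁lt]
        have hredy : ∀ z : Fin (q+1) → F,
            (∀ μ : ℕ, μ % 2 = 1 → μ < 8*m → μ ≠ i₀ → μ ≠ i₁ →
              ((pv z).map ι).eval (β ^ μ) = 0) →
            (∑ t ∈ Finset.range (4*m),
              (((pv x).map ι).eval (β ^ (2*t+1))) * (((pv z).map ι).eval (β ^ (8*m - (2*t+1)))))
            = (((pv x).map ι).eval (β ^ τ)) * (((pv z).map ι).eval (β ^ i₀))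
              + (((pv x).map ι).eval (β ^ (2*t₁+1))) * (((pv z).map ι).eval (β ^ i₁)) := by
          intro z hz
          rw [← Finset.sum_subset hpairsub (fun u hu hnu => ?_), Finset.sum_pair ht01,
            show 8*m - (2*t₀+1) = i₀ by omega, show 8*m - (2*t₁+1) = i₁ by omega, ht₀]
          have hu4 : u < 4*m := Finset.mem_range.1 hu
          simp only [Finset.mem_insert, Finset.mem_singleton] at hnu
          push_neg at hnu
          rw [hz (8*m - (2*u+1)) (by omega) (by omega) (by omega) (by omega), mul_zero]
        have hp1 := parseval hβ hq4 ι x y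
        rw [horth y hyC, map_zero, mul_zero, hredy y hevaly] at hp1
        have hp2 := parseval hβ hq4 ι x (negashift y)
        rw [horth _ hy'C, map_zero, mul_zero, hredy (negashift y) (fun μ h1 h2 h3 h4 => by
          rw [hevalshift μ h1, hevaly μ h1 h2 h3 h4, mul_zero]),
          hevalshift i₀ hi₀odd, hevalshift i₁ hi₁odd] at hp2
        have hβ01 : β ^ i₀ ≠ β ^ i₁ :=
          fun hcon => hi01 (hβ.pow_inj hi₀lt hi₁lt hcon)
        have hAB : (((pv x).map ι).eval (β ^ τ)) * (((pv y).map ι).eval (β ^ i₀)) = 0 := by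
          have key : (((pv x).map ι).eval (β ^ τ)) * (((pv y).map ι).eval (β ^ i₀))
              * (β ^ i₀ - β ^ i₁) = 0 := by
            linear_combination hp2 - β ^ i₁ * hp1
          rcases mul_eq_zero.1 key with h | h
          · exact h
          · exact absurd (sub_eq_zero.1 h) hβ01
        rcases mul_eq_zero.1 hAB with h | h
        · exact h
        · exact absurd h hBne
    by_contra hxne
    have hpvne : (pv x).map ι ≠ 0 := by
      rw [Ne, Polynomial.map_eq_zero]
      exact fun h => hxne (pv_eq_zero_iff.1 h)
    have hdvd : (∏ i ∈ EallF m, (X - C (β ^ i))) ∣ (pv x).map ι := by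
      refine prod_X_sub_C_dvd_of_roots _ _ ?_ hpvne ?_
      · intro i hi i' hi' hii
        rw [Finset.mem_coe, mem_EallF] at hi hi'
        exact hβ.pow_inj hi.2 hi'.2 hii
      · intro i hi
        rw [mem_EallF] at hi
        exact hEall i hi.1 hi.2
    have hprodne : (∏ i ∈ EallF m, (X - C (β ^ i))) ≠ 0 :=
      (Polynomial.monic_prod_of_monic _ _ (fun t _ => Polynomial.monic_X_sub_C _)).ne_zero
    have hdegprod : (∏ i ∈ EallF m, (X - C (β ^ i))).natDegree = 4*m := by
      rw [Polynomial.natDegree_prod _ _ (fun t _ => Polynomial.X_sub_C_ne_zero _)]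
      simp only [Polynomial.natDegree_X_sub_C, Finset.sum_const, smul_eq_mul, mul_one]
      exact card_EallF hq4
    have hle := Polynomial.degree_le_of_dvd hdvd hpvne
    rw [Polynomial.degree_eq_natDegree hprodne, hdegprod] at hle
    have hlt : ((pv x).map ι).degree < ((4*m : ℕ) : WithBot ℕ) := by
      refine lt_of_le_of_lt (Polynomial.degree_map_le) ?_
      rw [← hq4]
      exact pv_degree_lt x
    exact absurd (lt_of_le_of_lt hle hlt) (lt_irrefl _)
  · -- dimension
    let ψ : (Fin (4*lam) → F) →ₗ[F] (Fin (q+1) → F) :=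
      { toFun := fun a j => (g₀ * pv a).coeff (j:ℕ)
        map_add' := fun a b => by
          funext j
          show (g₀ * pv (a+b)).coeff (j:ℕ) = (g₀ * pv a).coeff (j:ℕ) + (g₀ * pv b).coeff (j:ℕ)
          rw [pv_add, mul_add, Polynomial.coeff_add]
        map_smul' := fun r a => by
          funext j
          show (g₀ * pv (r • a)).coeff (j:ℕ) = r * (g₀ * pv a).coeff (j:ℕ)
          rw [pv_smul, mul_left_comm, Polynomial.coeff_C_mul] }
    have hψapp : ∀ a : Fin (4*lam) → F, ψ a = fun j : Fin (q+1) => (g₀ * pv a).coeff (j:ℕ) :=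
      fun a => rfl
    have hdeg : ∀ a : Fin (4*lam) → F, (g₀ * pv a).degree < ((q+1 : ℕ) : WithBot ℕ) := by
      intro a
      by_cases ha : pv a = 0
      · rw [ha, mul_zero, Polynomial.degree_zero]
        exact WithBot.bot_lt_coe _
      · rw [Polynomial.degree_mul, Polynomial.degree_eq_natDegree hg₀ne, hg₀deg]
        have h2 : (pv a).degree < ((4*lam : ℕ) : WithBot ℕ) := pv_degree_lt a
        calc ((4*s : ℕ) : WithBot ℕ) + (pv a).degree
            < ((4*s : ℕ) : WithBot ℕ) + ((4*lam : ℕ) : WithBot ℕ) :=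
              WithBot.add_lt_add_left (WithBot.coe_ne_bot) h2
          _ = ((q+1 : ℕ) : WithBot ℕ) := by
              rw [← Nat.cast_add]
              congr 1
              omega
    have hψinjkey : ∀ a : Fin (4*lam) → F, ψ a = 0 → a = 0 := by
      intro a ha
      have hz : g₀ * pv a = 0 := by
        ext k
        by_cases hk : k < q+1
        · have h1 := congrFun ha ⟨k, hk⟩
          simpa [hψapp] using h1
        · rw [Polynomial.coeff_zero]
          refine Polynomial.coeff_eq_zero_of_degree_lt (lt_of_lt_of_le (hdeg a) ?_)
          exact_mod_cast (by omega : q + 1 ≤ k)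
      rcases mul_eq_zero.1 hz with h | h
      · exact absurd h hg₀ne
      · exact pv_eq_zero_iff.1 h
    have hψinj : Function.Injective ψ := by
      intro a b hab
      have h0 : ψ (a - b) = 0 := by rw [map_sub, hab, sub_self]
      have := hψinjkey _ h0
      exact sub_eq_zero.1 this
    have hrange : LinearMap.range ψ = Csub := by
      apply le_antisymm
      · rintro c ⟨a, rfl⟩
        show g₀ ∣ pv (ψ a)
        rw [hψapp, pv_of_coeff (hdeg a)]
        exact dvd_mul_right _ _
      · intro c hc
        obtain ⟨h, hh⟩ := (hmem c).1 hc
        by_cases hzero : h = 0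
        · refine ⟨0, ?_⟩
          rw [map_zero]
          have hc0 : c = 0 := by
            apply pv_eq_zero_iff.1
            rw [hh, hzero, mul_zero]
          rw [hc0]
        · have hhdeg : h.degree < ((4*lam : ℕ) : WithBot ℕ) := by
            have hpvdeg := pv_degree_lt c
            rw [hh, Polynomial.degree_mul, Polynomial.degree_eq_natDegree hg₀ne, hg₀deg,
              Polynomial.degree_eq_natDegree hzero, ← Nat.cast_add, Nat.cast_lt] at hpvdeg
            rw [Polynomial.degree_eq_natDegree hzero, Nat.cast_lt]
            omega
          refine ⟨fun j : Fin (4*lam) => h.coeff (j:ℕ), ?_⟩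
          rw [hψapp, pv_of_coeff hhdeg]
          funext j
          rw [← hh, pv_coeff, dif_pos j.isLt]
    rw [← hrange, LinearMap.finrank_range_of_inj hψinj]
    exact Module.finrank_fin_fun F
  · -- distance
    intro c hc hcne
    by_contra hlt
    push_neg at hlt
    have hwt : (Finset.univ.filter fun i : Fin (q+1) => c i ≠ 0).card = wt c := rfl
    set S := Finset.univ.filter (fun i : Fin (q+1) => c i ≠ 0) with hS
    have hcard : S.card ≤ 2*s := by omega
    have hw1 : 0 < S.card := by
      obtain ⟨j, hj⟩ : ∃ j, c j ≠ 0 := by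
        by_contra hno; push_neg at hno; exact hcne (funext hno)
      exact Finset.card_pos.2 ⟨j, by simp [hS, hj]⟩
    set w := S.card with hw
    let ε : Fin w ≃ {i // i ∈ S} := S.equivFin.symm
    let v : Fin w → K := fun k => β ^ (2 * ((ε k : Fin (q+1)) : ℕ))
    have hvinj : Function.Injective v := by
      intro k k' hkk
      have hb1 : ((ε k : Fin (q+1)) : ℕ) < q + 1 := (ε k : Fin (q+1)).isLt
      have hb2 : ((ε k' : Fin (q+1)) : ℕ) < q + 1 := (ε k' : Fin (q+1)).isLt
      have h1 := hβ.pow_inj (i := 2 * ((ε k : Fin (q+1)) : ℕ))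
        (j := 2 * ((ε k' : Fin (q+1)) : ℕ)) (by omega) (by omega) hkk
      apply ε.injective
      exact Subtype.ext (Fin.ext (by omega))
    let x' : Fin w → K := fun k => ι (c (ε k)) * β ^ ((2*lam+1) * ((ε k : Fin (q+1)) : ℕ))
    have hsys : ∀ t : Fin w, ∑ k, v k ^ (t:ℕ) * x' k = 0 := by
      intro t
      have ht2s : (t:ℕ) < 2*s := lt_of_lt_of_le t.isLt hcard
      have hmemZ : 2*(lam+(t:ℕ))+1 ∈ ZgF m lam s := by
        simp only [ZgF, Finset.mem_union, Finset.mem_image, Finset.mem_range]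
        exact Or.inl ⟨(t:ℕ), ht2s, rfl⟩
      have hzero := heval c hc (2*(lam+(t:ℕ))+1) hmemZ
      rw [pv_map_eval] at hzero
      have hres : ∑ j : Fin (q+1), ι (c j) * (β ^ (2*(lam+(t:ℕ))+1)) ^ (j:ℕ)
          = ∑ j ∈ S, ι (c j) * (β ^ (2*(lam+(t:ℕ))+1)) ^ (j:ℕ) := by
        symm
        apply Finset.sum_subset (Finset.subset_univ S)
        intro j _ hjS
        have hcj : c j = 0 := by
          by_contra hne
          exact hjS (by simp [hS, hne])
        simp [hcj]
      have hdx : ∑ j ∈ S, ι (c j) * (β ^ (2*(lam+(t:ℕ))+1)) ^ (j:ℕ)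
          = ∑ k : Fin w, ι (c (ε k)) * (β ^ (2*(lam+(t:ℕ))+1)) ^ ((ε k : Fin (q+1)) : ℕ) := by
        rw [← Finset.sum_coe_sort S (fun j => ι (c j) * (β ^ (2*(lam+(t:ℕ))+1)) ^ (j:ℕ))]
        exact (Equiv.sum_comp ε (fun j : {i // i ∈ S} =>
          ι (c (j : Fin (q+1))) * (β ^ (2*(lam+(t:ℕ))+1)) ^ ((j : Fin (q+1)) : ℕ))).symm
      have hterm : ∀ k : Fin w, v k ^ (t:ℕ) * x' k
          = ι (c (ε k)) * (β ^ (2*(lam+(t:ℕ))+1)) ^ ((ε k : Fin (q+1)) : ℕ) := by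
        intro k
        show (β ^ (2 * ((ε k : Fin (q+1)) : ℕ))) ^ (t:ℕ)
            * (ι (c (ε k)) * β ^ ((2*lam+1) * ((ε k : Fin (q+1)) : ℕ))) = _
        rw [← pow_mul, ← pow_mul, mul_left_comm, ← pow_add]
        congr 2
        ring
      rw [Finset.sum_congr rfl (fun k _ => hterm k), ← hdx, ← hres]
      exact hzero
    have hall0 : x' = 0 := by
      have hdet : ((Matrix.vandermonde v).transpose).det ≠ 0 := by
        rw [Matrix.det_transpose]
        exact Matrix.det_vandermonde_ne_zero_iff.2 hvinj
      refine Matrix.eq_zero_of_mulVec_eq_zero hdet ?_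
      funext t
      have := hsys t
      simpa [Matrix.mulVec, Matrix.vandermonde, Matrix.transpose_apply, dotProduct] using this
    have hk0 := congrFun hall0 ⟨0, hw1⟩
    have hεS : c (ε ⟨0, hw1⟩) ≠ 0 := by
      have h2 := (ε ⟨0, hw1⟩).2
      simp only [hS, Finset.mem_filter] at h2
      exact h2.2
    simp only [Pi.zero_apply] at hk0
    rcases mul_eq_zero.1 hk0 with h | h
    · exact hεS ((_root_.map_eq_zero ι).1 h)
    · exact pow_ne_zero _ hβne h

end MainCon

theorem stmt_4 (q : ℕ) (hq : IsPrimePow q) (hqodd : Odd q) (h4 : 4 ∣ q + 1)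
    (F : Type) [Field F] [Fintype F] (hF : Fintype.card F = q)
    (lam : ℕ) (hl1 : 1 ≤ lam) (hl2 : lam ≤ (q - 3) / 4) :
    ∃ C : Submodule F (Fin (q + 1) → F),
      IsNegacyclic C ∧ IsLCD C ∧
      Module.finrank F C = 4 * lam ∧
      ∀ c ∈ C, c ≠ 0 → (q + 3) / 2 - 2 * lam ≤ wt c := by
  classical
  obtain ⟨m, hm4⟩ := h4
  have hq7 : 7 ≤ q := by omega
  have hqodd' : q % 2 = 1 := Nat.odd_iff.1 hqodd
  have hm2 : 2 ≤ m := by omega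
  have hlam2 : lam ≤ m - 1 := by omega
  have hms : lam + (m - lam) = m := by omega
  have hs1 : 1 ≤ m - lam := by omega
  -- characteristic
  set p := ringChar F with hp
  obtain ⟨n', hpprime, hcard⟩ := FiniteField.card F p
  rw [hF] at hcard
  have hpdvdq : p ∣ q := by
    rw [hcard]
    exact dvd_pow_self p (by exact_mod_cast n'.pos.ne')
  have hpne2 : p ≠ 2 := by
    intro h2
    rw [h2] at hpdvdq
    omega
  -- the algebraic closure
  let K := AlgebraicClosure F
  let ι : F →+* K := algebraMap F K
  haveI : CharP K p := charP_of_injective_algebraMap ι.injective p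
  have hpndvd : ¬ p ∣ 8 * m := by
    intro hdvd
    have h8 : 8 * m = 2 * (q + 1) := by omega
    rw [h8] at hdvd
    rcases (Nat.Prime.dvd_mul hpprime).1 hdvd with h | h
    · exact hpne2 ((Nat.prime_dvd_prime_iff_eq hpprime Nat.prime_two).1 h)
    · have hd1 : p ∣ (q + 1) - q := Nat.dvd_sub h hpdvdq
      rw [show q + 1 - q = 1 by omega] at hd1
      exact absurd (Nat.eq_one_of_dvd_one hd1) hpprime.ne_one
  haveI : NeZero ((8*m : ℕ) : K) := ⟨by
    rw [Ne, CharP.cast_eq_zero_iff K p]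
    exact hpndvd⟩
  obtain ⟨β, hβ⟩ := HasEnoughRootsOfUnity.exists_primitiveRoot K (8*m)
  haveI : Fact p.Prime := ⟨hpprime⟩
  let φ : K →+* K := iterateFrobenius K p (n' : ℕ)
  have hφ : ∀ z : K, φ z = z ^ q := fun z => by
    show iterateFrobenius K p (n' : ℕ) z = z ^ q
    rw [iterateFrobenius_def, ← hcard]
  obtain ⟨C, h1, h2, h3, h4'⟩ := main_con ι φ hm4 hms hs1 hl1 hF hβ hφ
  refine ⟨C, h1, h2, h3, ?_⟩
  intro c hc hne
  have hb := h4' c hc hne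
  have : (q + 3) / 2 - 2 * lam = 2 * (m - lam) + 1 := by omega
  omega
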